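/- Suppose char F = 0 or char F = p > d, and |F| ≥ 2d−1. Then there is no projective subspace of codimension two in PG(d,F) meeting every tangent line ℓ_t of the moment curve (t ∈ F). -/

import Mathlib

open Polynomial


-- step: derivative = 0 and natDegree ≤ d with char condition implies constant
lemma const_of_deriv_zero {F : Type*} [Field F] {d : ℕ}
    (hchar : CharP F 0 ∨ ∃ p : ℕ, p.Prime ∧ CharP F p ∧ d < p)
    {f : F[X]} (hdeg : f.natDegree ≤ d) (hder : derivative f = 0) :
    f = C (f.coeff 0) := by
  ext n
  cases n with
  | zero => simp
  | succ n =>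
    rw [coeff_C]
    simp only [Nat.succ_ne_zero, if_false]
    by_cases hn : n + 1 ≤ d
    · have h := congrArg (fun g => Polynomial.coeff g n) hder
      simp only [coeff_derivative, coeff_zero] at h
      have hne : ((n : F) + 1) ≠ 0 := by
        have : (((n+1 : ℕ) : F)) ≠ 0 := by
          rcases hchar with hc | ⟨p, hp, hc, hdp⟩
          · haveI := hc
            haveI : CharZero F := CharP.charP_to_charZero F
            exact_mod_cast Nat.succ_ne_zero n
          · haveI := hc
            rw [Ne, CharP.cast_eq_zero_iff F p]
            exact Nat.not_dvd_of_pos_of_lt (Nat.succ_pos n) (lt_of_le_of_lt hn hdp)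
        simpa using this
      exact (mul_eq_zero.mp h).resolve_right hne
    · exact coeff_eq_zero_of_natDegree_lt (lt_of_le_of_lt hdeg (by omega))

lemma dep_of_wronskian_eval_zero {F : Type*} [Field F] {d : ℕ}
    (hchar : CharP F 0 ∨ ∃ p : ℕ, p.Prime ∧ CharP F p ∧ d < p)
    (hF : ((2 * d - 1 : ℕ) : Cardinal) ≤ Cardinal.mk F)
    {P Q : F[X]} (hP : P.natDegree ≤ d) (hQ : Q.natDegree ≤ d - 1)
    (hev : ∀ t : F, (wronskian P Q).eval t = 0) :
    ∃ a b : F, (a ≠ 0 ∨ b ≠ 0) ∧ a • P + b • Q = 0 := by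
  by_cases hP0 : P = 0
  · exact ⟨1, 0, Or.inl one_ne_zero, by simp [hP0]⟩
  by_cases hQ0 : Q = 0
  · exact ⟨0, 1, Or.inr one_ne_zero, by simp [hQ0]⟩
  have hW : wronskian P Q = 0 := by
    by_contra hW
    have hlt : (wronskian P Q).natDegree < P.natDegree + Q.natDegree :=
      natDegree_wronskian_lt_add hW
    have hlt2 : (wronskian P Q).natDegree < 2 * d - 1 := by omega
    have : wronskian P Q = 0 := by
      apply eq_zero_of_forall_eval_zero_of_natDegree_lt_card _ hev
      exact lt_of_lt_of_le (by exact_mod_cast Nat.cast_lt.mpr hlt2) hF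
    exact hW this
  classical
  set G := GCDMonoid.gcd P Q with hGdef
  have hG : G ≠ 0 := fun h => hP0 ((gcd_eq_zero_iff P Q).mp h).1
  set P₁ := P / G with hP1def
  set Q₁ := Q / G with hQ1def
  have hPe : P = G * P₁ := (EuclideanDomain.mul_div_cancel' hG (gcd_dvd_left P Q)).symm
  have hQe : Q = G * Q₁ := (EuclideanDomain.mul_div_cancel' hG (gcd_dvd_right P Q)).symm
  have hcop : IsCoprime P₁ Q₁ := isCoprime_div_gcd_div_gcd hQ0
  have hfact : wronskian P Q = G ^ 2 * wronskian P₁ Q₁ := by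
    rw [hPe, hQe]
    simp only [wronskian, derivative_mul]
    ring
  have hW1 : wronskian P₁ Q₁ = 0 := by
    rw [hfact] at hW
    rcases mul_eq_zero.mp hW with h | h
    · exact absurd h (pow_ne_zero 2 hG)
    · exact h
  obtain ⟨hdP1, hdQ1⟩ := hcop.wronskian_eq_zero_iff.mp hW1
  have hP1d : P₁.natDegree ≤ d :=
    le_trans (Polynomial.natDegree_le_of_dvd ⟨G, by rw [hPe]; ring⟩ hP0) hP
  have hQ1d : Q₁.natDegree ≤ d :=
    le_trans (le_trans (Polynomial.natDegree_le_of_dvd ⟨G, by rw [hQe]; ring⟩ hQ0) hQ) (by omega)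
  have hP1C : P₁ = C (P₁.coeff 0) := const_of_deriv_zero hchar hP1d hdP1
  have hQ1C : Q₁ = C (Q₁.coeff 0) := const_of_deriv_zero hchar hQ1d hdQ1
  have hc : P₁.coeff 0 ≠ 0 := by
    intro h
    apply hP0
    rw [hPe, hP1C, h, C_0, mul_zero]
  refine ⟨Q₁.coeff 0, -(P₁.coeff 0), Or.inr (neg_ne_zero.mpr hc), ?_⟩
  rw [hPe, hQe, hP1C, hQ1C]
  simp only [smul_eq_C_mul, coeff_C_zero, coeff_neg, map_neg]
  ring
open Polynomial

noncomputable def dualPoly {F : Type*} [Field F] {d : ℕ}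
    (φ : Module.Dual F (Fin (d + 1) → F)) : F[X] :=
  ∑ i : Fin (d + 1), C (φ (Pi.single i 1)) * X ^ (i : ℕ)

lemma dual_apply_eq_sum {F : Type*} [Field F] {d : ℕ}
    (φ : Module.Dual F (Fin (d + 1) → F)) (v : Fin (d + 1) → F) :
    φ v = ∑ i : Fin (d + 1), v i * φ (Pi.single i 1) := by
  have step : ∀ i : Fin (d + 1),
      v i • (Pi.single i (1 : F) : Fin (d + 1) → F) = Pi.single i (v i) := by
    intro i; rw [← Pi.single_smul, smul_eq_mul, mul_one]
  have hv : ∑ i : Fin (d + 1), v i • (Pi.single i (1 : F) : Fin (d + 1) → F) = v := by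
    simp_rw [step]; exact Finset.univ_sum_single v
  conv_lhs => rw [← hv]
  rw [map_sum]
  simp [smul_eq_mul]

lemma dualPoly_natDegree_le {F : Type*} [Field F] {d : ℕ}
    (φ : Module.Dual F (Fin (d + 1) → F)) : (dualPoly φ).natDegree ≤ d := by
  apply Polynomial.natDegree_sum_le_of_forall_le
  intro i _
  apply le_trans (Polynomial.natDegree_C_mul_le _ _)
  simpa using Nat.lt_succ_iff.mp i.isLt

lemma eval_dualPoly {F : Type*} [Field F] {d : ℕ}
    (φ : Module.Dual F (Fin (d + 1) → F)) (t : F) :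
    (dualPoly φ).eval t = φ (fun i => t ^ (i : ℕ)) := by
  rw [dual_apply_eq_sum φ, dualPoly, eval_finset_sum]
  refine Finset.sum_congr rfl fun i _ => ?_
  rw [eval_mul, eval_C, eval_pow, eval_X, mul_comm]

lemma eval_derivative_dualPoly {F : Type*} [Field F] {d : ℕ}
    (φ : Module.Dual F (Fin (d + 1) → F)) (t : F) :
    (derivative (dualPoly φ)).eval t
      = φ (fun i => ((i : ℕ) : F) * t ^ ((i : ℕ) - 1)) := by
  rw [dual_apply_eq_sum φ, dualPoly, derivative_sum, eval_finset_sum]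
  refine Finset.sum_congr rfl fun i _ => ?_
  rw [derivative_C_mul, derivative_X_pow]
  simp only [eval_mul, eval_C, eval_natCast, eval_pow, eval_X]
  ring

lemma dualPoly_smul_add {F : Type*} [Field F] {d : ℕ}
    (φ ψ : Module.Dual F (Fin (d + 1) → F)) (x y : F) :
    dualPoly (x • φ + y • ψ) = x • dualPoly φ + y • dualPoly ψ := by
  simp only [dualPoly, Finset.smul_sum, smul_eq_C_mul, ← Finset.sum_add_distrib]
  refine Finset.sum_congr rfl fun i _ => ?_
  simp only [LinearMap.add_apply, LinearMap.smul_apply, smul_eq_mul, map_add, map_mul]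
  ring

lemma dualPoly_eq_zero {F : Type*} [Field F] {d : ℕ}
    {φ : Module.Dual F (Fin (d + 1) → F)} (h : dualPoly φ = 0) : φ = 0 := by
  have hc : ∀ j : Fin (d + 1), φ (Pi.single j 1) = 0 := by
    intro j
    have h2 := congrArg (fun g => Polynomial.coeff g (j : ℕ)) h
    simp only [dualPoly, Polynomial.finset_sum_coeff, coeff_C_mul, coeff_X_pow,
      coeff_zero] at h2
    rwa [Finset.sum_eq_single j
      (fun i _ hij => by rw [if_neg (fun hc => hij (Fin.val_injective hc).symm), mul_zero])
      (fun hj => absurd (Finset.mem_univ j) hj), if_pos rfl, mul_one] at h2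
  refine LinearMap.ext fun v => ?_
  rw [dual_apply_eq_sum]
  simp [hc]

theorem linInd_subtype_aux (F M : Type*) [Field F] [AddCommGroup M] [Module F M] (A : Submodule F M)
    (b : Module.Basis (Fin 2) F A) : LinearIndependent F (fun i : Fin 2 => ((b i : A) : M)) :=
  b.linearIndependent.map' A.subtype (Submodule.ker_subtype _)

theorem fintype_linInd_aux {F M : Type*} [Field F] [AddCommGroup M] [Module F M] {v : Fin 2 → M}
    (h : LinearIndependent F v) (g : Fin 2 → F) (hs : ∑ i, g i • v i = 0) : ∀ i, g i = 0 :=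
  Fintype.linearIndependent_iff.mp h g hs

/-- The tangent line of the moment curve `t ↦ (1, t, …, t^d)` at parameter `t`, i.e. the
line spanned by `a(t) = (1, t, …, t^d)` and `ȧ(t) = (0, 1, 2t, …, d t^{d-1})`. -/
def momentTangent (F : Type*) [Field F] (d : ℕ) (t : F) :
    Submodule F (Fin (d + 1) → F) :=
  Submodule.span F
    {fun i : Fin (d + 1) => t ^ (i : ℕ), fun i : Fin (d + 1) => ((i : ℕ) : F) * t ^ ((i : ℕ) - 1)}

/-- If `char F = 0` or `char F = p > d`, and `|F| ≥ 2d - 1`, then no codimension-two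
subspace of `PG(d,F)` meets every tangent line of the moment curve. -/
theorem no_transversal_of_moment_tangents (F : Type*) [Field F] (d : ℕ)
    (hchar : CharP F 0 ∨ ∃ p : ℕ, p.Prime ∧ CharP F p ∧ d < p)
    (hF : ((2 * d - 1 : ℕ) : Cardinal) ≤ Cardinal.mk F) :
    ¬ ∃ H : Submodule F (Fin (d + 1) → F),
        Module.finrank F H = d - 1 ∧ ∀ t : F, momentTangent F d t ⊓ H ≠ ⊥ := by
  rintro ⟨H, hrank, hmeet⟩
  by_cases hd0 : d = 0
  · subst hd0
    have hH : H = ⊥ := Submodule.finrank_eq_zero.mp (by simpa using hrank)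
    exact hmeet 0 (by rw [hH, inf_bot_eq])
  have hd1 : 1 ≤ d := Nat.one_le_iff_ne_zero.mpr hd0
  have hVrank : Module.finrank F (Fin (d + 1) → F) = d + 1 := Module.finrank_fin_fun F
  have hannrank : Module.finrank F H.dualAnnihilator = 2 := by
    have h1 : Module.finrank F H.dualAnnihilator
        = Module.finrank F ((Fin (d + 1) → F) ⧸ H) :=
      (Subspace.quotEquivAnnihilator H).finrank_eq.symm
    have h2 := Submodule.finrank_quotient_add_finrank H
    rw [hVrank, hrank] at h2
    omega
  obtain ⟨A, hAeq⟩ : ∃ A : Submodule F (Module.Dual F (Fin (d + 1) → F)),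
      A = H.dualAnnihilator := ⟨_, rfl⟩
  rw [← hAeq] at hannrank
  haveI : Module.Free F A := Module.Free.of_divisionRing F A
  haveI : Module.Finite F A := inferInstance
  obtain b := Module.finBasisOfFinrankEq F A hannrank
  set φ := ((b 0 : A) : Module.Dual F (Fin (d + 1) → F)) with hφ
  set ψ := ((b 1 : A) : Module.Dual F (Fin (d + 1) → F)) with hψ
  have hφH : ∀ v ∈ H, φ v = 0 := fun v hv =>
    (Submodule.mem_dualAnnihilator _).mp (hAeq ▸ (b 0).2) v hv
  have hψH : ∀ v ∈ H, ψ v = 0 := fun v hv =>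
    (Submodule.mem_dualAnnihilator _).mp (hAeq ▸ (b 1).2) v hv
  have hind : ∀ x y : F, x • φ + y • ψ = 0 → x = 0 ∧ y = 0 := by
    intro x y hxy
    have hli : LinearIndependent F
        (fun i : Fin 2 => ((b i : A) : Module.Dual F (Fin (d + 1) → F))) :=
      linInd_subtype_aux F _ A b
    have hsum : ∑ i : Fin 2, ![x, y] i •
        ((b i : A) : Module.Dual F (Fin (d + 1) → F)) = 0 := by
      rw [Fin.sum_univ_two]
      simp only [Matrix.cons_val_zero, Matrix.cons_val_one, Matrix.head_cons]
      exact hxy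
    have hz := fintype_linInd_aux hli ![x, y] hsum
    exact ⟨hz 0, hz 1⟩
  set P := dualPoly φ with hP
  set Q := dualPoly ψ with hQ
  have hPdle : P.natDegree ≤ d := dualPoly_natDegree_le φ
  have hQdle : Q.natDegree ≤ d := dualPoly_natDegree_le ψ
  have hev : ∀ t : F, (Polynomial.wronskian P Q).eval t = 0 := by
    intro t
    obtain ⟨v, hvmem, hv0⟩ := (Submodule.ne_bot_iff _).mp (hmeet t)
    obtain ⟨hvt, hvH⟩ := Submodule.mem_inf.mp hvmem
    rw [momentTangent] at hvt
    obtain ⟨α, β, hab⟩ := Submodule.mem_span_pair.mp hvt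
    have hPa : α * P.eval t + β * (derivative P).eval t = 0 := by
      rw [hP, eval_dualPoly, eval_derivative_dualPoly]
      have h := hφH v hvH
      rw [← hab] at h
      simpa [smul_eq_mul] using h
    have hQa : α * Q.eval t + β * (derivative Q).eval t = 0 := by
      rw [hQ, eval_dualPoly, eval_derivative_dualPoly]
      have h := hψH v hvH
      rw [← hab] at h
      simpa [smul_eq_mul] using h
    have hne : ¬(α = 0 ∧ β = 0) := by
      rintro ⟨rfl, rfl⟩
      apply hv0
      rw [← hab]
      simp
    rw [wronskian]
    simp only [eval_sub, eval_mul]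
    rcases not_and_or.mp hne with hα | hβ
    · have key : α * (P.eval t * (derivative Q).eval t
          - (derivative P).eval t * Q.eval t) = 0 := by
        linear_combination ((derivative Q).eval t) * hPa - ((derivative P).eval t) * hQa
      exact sub_eq_zero.mp ((sub_eq_zero.mpr ((mul_eq_zero.mp key).resolve_left hα)).trans rfl)
    · have key : β * (P.eval t * (derivative Q).eval t
          - (derivative P).eval t * Q.eval t) = 0 := by
        linear_combination (P.eval t) * hQa - (Q.eval t) * hPa
      exact sub_eq_zero.mp ((sub_eq_zero.mpr ((mul_eq_zero.mp key).resolve_left hβ)).trans rfl)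
  obtain ⟨x, y, hxy0, hxy⟩ : ∃ x y : F, (x ≠ 0 ∨ y ≠ 0) ∧ x • P + y • Q = 0 := by
    by_cases hPd : P.coeff d = 0
    · have hPdeg : P.natDegree ≤ d - 1 := by
        rw [Polynomial.natDegree_le_iff_coeff_eq_zero]
        intro m hm
        rcases eq_or_lt_of_le (show d ≤ m by omega) with rfl | h
        · exact hPd
        · exact Polynomial.coeff_eq_zero_of_natDegree_lt
            (lt_of_le_of_lt hPdle h)
      have hev' : ∀ t : F, (Polynomial.wronskian Q P).eval t = 0 := by
        intro t
        rw [← Polynomial.wronskian_neg_eq]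
        simp [hev t]
      obtain ⟨a, bb, h0, h⟩ :=
        dep_of_wronskian_eval_zero hchar hF hQdle hPdeg hev'
      exact ⟨bb, a, h0.symm, by rw [← h, add_comm]⟩
    · set c := Q.coeff d / P.coeff d with hc
      set Q' := Q - c • P with hQ'
      have hQ'c : ∀ m, d ≤ m → Q'.coeff m = 0 := by
        intro m hm
        rcases eq_or_lt_of_le hm with rfl | h
        · rw [hQ', Polynomial.coeff_sub, Polynomial.coeff_smul, hc, smul_eq_mul,
            div_mul_cancel₀ _ hPd, sub_self]
        · rw [hQ', Polynomial.coeff_sub, Polynomial.coeff_smul]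
          rw [Polynomial.coeff_eq_zero_of_natDegree_lt (lt_of_le_of_lt hQdle h),
            Polynomial.coeff_eq_zero_of_natDegree_lt (lt_of_le_of_lt hPdle h)]
          simp
      have hQ'deg : Q'.natDegree ≤ d - 1 := by
        rw [Polynomial.natDegree_le_iff_coeff_eq_zero]
        intro m hm
        exact hQ'c m (by omega)
      have hev' : ∀ t : F, (Polynomial.wronskian P Q').eval t = 0 := by
        intro t
        have hw : Polynomial.wronskian P Q' = Polynomial.wronskian P Q := by
          rw [hQ', Polynomial.smul_eq_C_mul]
          simp only [wronskian, derivative_sub, derivative_mul, derivative_C]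
          ring
        rw [hw]
        exact hev t
      obtain ⟨a, bb, h0, h⟩ :=
        dep_of_wronskian_eval_zero hchar hF hPdle hQ'deg hev'
      refine ⟨a - bb * c, bb, ?_, ?_⟩
      · by_cases hbb : bb = 0
        · subst hbb
          rcases h0 with ha | hb
          · left; simpa using ha
          · exact absurd rfl hb
        · exact Or.inr hbb
      · have h2 : (a - bb * c) • P + bb • Q = a • P + bb • Q' := by
          rw [hQ', smul_sub, smul_smul, sub_smul]
          abel
        rw [h2]
        exact h
  have hzero : x • φ + y • ψ = 0 :=
    dualPoly_eq_zero (by rw [dualPoly_smul_add]; exact hxy)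
  obtain ⟨hx, hy⟩ := hind x y hzero
  rcases hxy0 with h | h
  · exact h hx
  · exact h hy
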